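/- Let G be a Hausdorff étale groupoid and let σ, τ : G^(2) → T ≤ R^× be continuous 2-cocycles. The following are equivalent: (1) the discrete twists G ×_σ T and G ×_τ T are isomorphic; (2) σ is cohomologous to τ; (3) σ is induced by some continuous global section P : G → G ×_τ T. -/

import Mathlib

/-!
Common definitions: topological groupoids, bisections, étale/ample groupoids,
continuous `Rˣ`-valued 2-cocycles, and twisted Steinberg algebras.

A groupoid is modelled as a type `G` together with a composability predicate
`comp`, a (partial, junk-valued off composable pairs) multiplication `mul`,
and an inversion `inv`.  The range and source maps are `r γ = γ γ⁻¹` and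
`s γ = γ⁻¹ γ`, and the unit space is the set of fixed points of `r`.
-/

namespace TwistedSteinberg

structure GroupoidStruct (G : Type*) where
  comp : G → G → Prop
  mul : G → G → G
  inv : G → G

namespace GroupoidStruct

variable {G : Type*}

/-- The range map `r γ = γ γ⁻¹`. -/
def r (T : GroupoidStruct G) (γ : G) : G := T.mul γ (T.inv γ)

/-- The source map `s γ = γ⁻¹ γ`. -/
def s (T : GroupoidStruct G) (γ : G) : G := T.mul (T.inv γ) γ

/-- The unit space `G⁰`. -/
def unitSpace (T : GroupoidStruct G) : Set G := {x | T.r x = x}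

/-- The axioms making `(comp, mul, inv)` a groupoid. -/
structure IsGroupoid (T : GroupoidStruct G) : Prop where
  comp_iff : ∀ a b, T.comp a b ↔ T.s a = T.r b
  assoc : ∀ a b c, T.comp a b → T.comp b c →
    T.mul (T.mul a b) c = T.mul a (T.mul b c)
  inv_inv : ∀ a, T.inv (T.inv a) = a
  r_mul : ∀ a b, T.comp a b → T.r (T.mul a b) = T.r a
  s_mul : ∀ a b, T.comp a b → T.s (T.mul a b) = T.s b
  r_inv : ∀ a, T.r (T.inv a) = T.s a
  s_inv : ∀ a, T.s (T.inv a) = T.r a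
  r_mul_self : ∀ a, T.mul (T.r a) a = a
  mul_s_self : ∀ a, T.mul a (T.s a) = a
  r_unit : ∀ a, T.r a ∈ T.unitSpace
  s_unit : ∀ a, T.s a ∈ T.unitSpace

/-- A topological groupoid: inversion is continuous and multiplication is
continuous on the set of composable pairs. -/
structure IsTopGroupoid [TopologicalSpace G] (T : GroupoidStruct G)
    extends IsGroupoid T : Prop where
  continuous_inv : Continuous T.inv
  continuousOn_mul : ContinuousOn (fun p : G × G => T.mul p.1 p.2)
    {p : G × G | T.comp p.1 p.2}

/-- `B` is a bisection if it is contained in an open set `U` on which both `r`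
and `s` restrict to homeomorphisms onto open subsets. -/
def IsBisection [TopologicalSpace G] (T : GroupoidStruct G) (B : Set G) : Prop :=
  ∃ U : Set G, B ⊆ U ∧ IsOpen U ∧ Set.InjOn T.r U ∧ Set.InjOn T.s U ∧
    ∀ V : Set G, V ⊆ U → IsOpen V → IsOpen (T.r '' V) ∧ IsOpen (T.s '' V)

/-- A groupoid is étale if its range map is a local homeomorphism. -/
def IsEtale [TopologicalSpace G] (T : GroupoidStruct G) : Prop :=
  IsLocalHomeomorph T.r

/-- A groupoid is ample if it has a basis of compact open bisections. -/
def IsAmple [TopologicalSpace G] (T : GroupoidStruct G) : Prop :=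
  TopologicalSpace.IsTopologicalBasis
    {B : Set G | IsCompact B ∧ IsOpen B ∧ T.IsBisection B}

/-- The product `BD` of two subsets of a groupoid. -/
def setMul (T : GroupoidStruct G) (B D : Set G) : Set G :=
  {x | ∃ a ∈ B, ∃ b ∈ D, T.comp a b ∧ T.mul a b = x}

end GroupoidStruct

open GroupoidStruct

section Cocycle

variable {G R : Type*} [TopologicalSpace G] [CommRing R] [TopologicalSpace R]

/-- A continuous normalised `Rˣ`-valued 2-cocycle on the groupoid `T`. -/
structure IsCocycle (T : GroupoidStruct G) (σ : G → G → Rˣ) : Prop where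
  continuousOn : ContinuousOn (fun p : G × G => ((σ p.1 p.2 : Rˣ) : R))
    {p : G × G | T.comp p.1 p.2}
  cocycle : ∀ a b c, T.comp a b → T.comp b c →
    σ a b * σ (T.mul a b) c = σ a (T.mul b c) * σ b c
  norm_left : ∀ γ : G, σ (T.r γ) γ = 1
  norm_right : ∀ γ : G, σ γ (T.s γ) = 1

/-- The underlying `R`-module of the (twisted) Steinberg algebra: locally
constant compactly supported functions `G → R`. -/
def steinbergCarrier (G R : Type*) [TopologicalSpace G] [Zero R] : Set (G → R) :=
  {f | IsLocallyConstant f ∧ IsCompact (Function.support f)}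

/-- The twisted convolution product
`(f *σ g)(γ) = ∑_{αβ = γ} σ(α,β) f(α) g(β)`. -/
noncomputable def conv (T : GroupoidStruct G) (σ : G → G → Rˣ)
    (f g : G → R) (γ : G) : R :=
  ∑ᶠ (p : G × G) (_ : T.comp p.1 p.2 ∧ T.mul p.1 p.2 = γ),
    ((σ p.1 p.2 : Rˣ) : R) * f p.1 * g p.2

/-- A `T`-inverse involution on `R`: a ring involution restricting to
inversion on the subgroup `Tsub ≤ Rˣ`. -/
def IsTInverseInvolution (Tsub : Subgroup Rˣ) (c : R → R) : Prop :=
  c 1 = 1 ∧ (∀ x y, c (x + y) = c x + c y) ∧ (∀ x y, c (x * y) = c x * c y) ∧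
    (∀ x, c (c x) = x) ∧ ∀ z : Rˣ, z ∈ Tsub → c ((z : Rˣ) : R) = ((z⁻¹ : Rˣ) : R)

/-- The twisted involution `f*(γ) = σ(γ,γ⁻¹)⁻¹ ⬝ c (f (γ⁻¹))`. -/
noncomputable def convStar (T : GroupoidStruct G) (σ : G → G → Rˣ) (c : R → R)
    (f : G → R) (γ : G) : R :=
  (((σ γ (T.inv γ))⁻¹ : Rˣ) : R) * c (f (T.inv γ))

end Cocycle
section Twist

/-!
Discrete twists `G⁰ × T → Σ → G` over a Hausdorff étale groupoid `G`,
where `T = Tsub` is a subgroup of the units `Rˣ` of a discrete commutative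
unital ring `R`.  The inclusion is modelled as a map `i : G → Tsub → Σ`
(only its values `i x z` for `x ∈ G⁰` are relevant).
-/

variable {G S R : Type*} [TopologicalSpace G] [TopologicalSpace S]
  [CommRing R] [TopologicalSpace R]

/-- A discrete twist `(Σ, i, q)` by `Tsub ≤ Rˣ` over `G`. -/
structure IsDiscreteTwist (TG : GroupoidStruct G) (TS : GroupoidStruct S)
    (Tsub : Subgroup Rˣ) (i : G → Tsub → S) (q : S → G) : Prop where
  topS : TS.IsTopGroupoid
  t2S : T2Space S
  locallyCompactS : LocallyCompactSpace S
  unit_eq : TS.unitSpace = (fun x => i x 1) '' TG.unitSpace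
  i_continuousOn : ContinuousOn (fun p : G × Tsub => i p.1 p.2)
    (TG.unitSpace ×ˢ (Set.univ : Set Tsub))
  i_injective : ∀ x ∈ TG.unitSpace, ∀ x' ∈ TG.unitSpace, ∀ z z' : Tsub,
    i x z = i x' z' → x = x' ∧ z = z'
  i_comp : ∀ x ∈ TG.unitSpace, ∀ z w : Tsub, TS.comp (i x z) (i x w)
  i_mul : ∀ x ∈ TG.unitSpace, ∀ z w : Tsub, TS.mul (i x z) (i x w) = i x (z * w)
  i_inv : ∀ x ∈ TG.unitSpace, ∀ z : Tsub, TS.inv (i x z) = i x z⁻¹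
  q_continuous : Continuous q
  q_surjective : Function.Surjective q
  q_quotient : ∀ V : Set G, IsOpen V ↔ IsOpen (q ⁻¹' V)
  q_comp : ∀ ε δ, TS.comp ε δ → TG.comp (q ε) (q δ)
  q_mul : ∀ ε δ, TS.comp ε δ → q (TS.mul ε δ) = TG.mul (q ε) (q δ)
  q_inv : ∀ ε, q (TS.inv ε) = TG.inv (q ε)
  q_i : ∀ x ∈ TG.unitSpace, ∀ z : Tsub, q (i x z) = x
  i_q_unit : ∀ ε ∈ TS.unitSpace, i (q ε) 1 = ε
  q_unit_mem : ∀ ε ∈ TS.unitSpace, q ε ∈ TG.unitSpace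
  exact_fibre : ∀ x ∈ TG.unitSpace, ∀ ε, q ε = x ↔ ∃ z : Tsub, ε = i x z
  central_comp_left : ∀ (ε : S) (z : Tsub), TS.comp (i (TG.r (q ε)) z) ε
  central_comp_right : ∀ (ε : S) (z : Tsub), TS.comp ε (i (TG.s (q ε)) z)
  central : ∀ (ε : S) (z : Tsub),
    TS.mul (i (TG.r (q ε)) z) ε = TS.mul ε (i (TG.s (q ε)) z)
  locally_trivial : ∀ α : G, ∃ B : Set G, α ∈ B ∧ IsOpen B ∧ TG.IsBisection B ∧
    ∃ P : G → S, ContinuousOn P B ∧ (∀ β ∈ B, q (P β) = β) ∧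
      Set.BijOn (fun p : G × Tsub => TS.mul (i (TG.r p.1) p.2) (P p.1))
        (B ×ˢ (Set.univ : Set Tsub)) (q ⁻¹' B) ∧
      ContinuousOn (fun p : G × Tsub => TS.mul (i (TG.r p.1) p.2) (P p.1))
        (B ×ˢ (Set.univ : Set Tsub)) ∧
      ∀ V ⊆ B ×ˢ (Set.univ : Set Tsub), IsOpen V →
        IsOpen ((fun p : G × Tsub => TS.mul (i (TG.r p.1) p.2) (P p.1)) '' V)

/-- The action `z ⬝ ε = i(r(ε), z) ε` of `Tsub` on the twist `Σ`. -/
def twistAct (TG : GroupoidStruct G) (TS : GroupoidStruct S)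
    {Tsub : Subgroup Rˣ} (i : G → Tsub → S) (q : S → G) (z : Tsub) (ε : S) : S :=
  TS.mul (i (TG.r (q ε)) z) ε

/-- A continuous global section `P : G → Σ` of the twist. -/
def IsGlobalSection (TG : GroupoidStruct G) (TS : GroupoidStruct S)
    (q : S → G) (P : G → S) : Prop :=
  Continuous P ∧ (∀ γ, q (P γ) = γ) ∧ ∀ x ∈ TG.unitSpace, P x ∈ TS.unitSpace

/-- The 2-cocycle `σ` is induced by the section `P`, i.e.
`P(α) P(β) P(αβ)⁻¹ = i(r(α), σ(α,β))` for composable `(α,β)`. -/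
def InducesCocycle (TG : GroupoidStruct G) (TS : GroupoidStruct S)
    {Tsub : Subgroup Rˣ} (i : G → Tsub → S) (P : G → S) (σ : G → G → Tsub) : Prop :=
  ∀ α β, TG.comp α β →
    TS.mul (TS.mul (P α) (P β)) (TS.inv (P (TG.mul α β))) = i (TG.r α) (σ α β)

/-- A continuous normalised 2-cocycle with values in the subgroup `Tsub ≤ Rˣ`. -/
structure IsCocycleSub (TG : GroupoidStruct G) (Tsub : Subgroup Rˣ)
    (σ : G → G → Tsub) : Prop where
  continuousOn : ContinuousOn (fun p : G × G => (((σ p.1 p.2 : Rˣ)) : R))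
    {p : G × G | TG.comp p.1 p.2}
  cocycle : ∀ a b c, TG.comp a b → TG.comp b c →
    σ a b * σ (TG.mul a b) c = σ a (TG.mul b c) * σ b c
  norm_left : ∀ γ : G, σ (TG.r γ) γ = 1
  norm_right : ∀ γ : G, σ γ (TG.s γ) = 1

/-- `σ` and `τ` are cohomologous via the continuous function `b : G → Tsub`. -/
def CohomologousVia (TG : GroupoidStruct G) {Tsub : Subgroup Rˣ}
    (σ τ : G → G → Tsub) (b : G → Tsub) : Prop :=
  Continuous (fun γ : G => ((b γ : Rˣ) : R)) ∧ (∀ x ∈ TG.unitSpace, b x = 1) ∧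
    ∀ α β, TG.comp α β → σ α β * (τ α β)⁻¹ = b α * b β * (b (TG.mul α β))⁻¹

/-- The twisted groupoid `G ×_σ T`. -/
def prodTwist (TG : GroupoidStruct G) (Tsub : Subgroup Rˣ) (σ : G → G → Tsub) :
    GroupoidStruct (G × Tsub) where
  comp p p' := TG.comp p.1 p'.1
  mul p p' := (TG.mul p.1 p'.1, σ p.1 p'.1 * p.2 * p'.2)
  inv p := (TG.inv p.1, (σ p.1 (TG.inv p.1))⁻¹ * p.2⁻¹)

/-- The inclusion `i_σ : G⁰ × T → G ×_σ T`. -/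
def prodTwistI (Tsub : Subgroup Rˣ) : G → Tsub → G × Tsub := fun x z => (x, z)

/-- The projection `q_σ : G ×_σ T → G`. -/
def prodTwistQ (Tsub : Subgroup Rˣ) : G × Tsub → G := fun p => p.1

/-- An isomorphism of discrete twists: a homeomorphism and groupoid
isomorphism intertwining the inclusions and projections. -/
def IsTwistIso {S1 S2 : Type*} [TopologicalSpace S1] [TopologicalSpace S2]
    (TG : GroupoidStruct G) (T1 : GroupoidStruct S1) (T2 : GroupoidStruct S2)
    {Tsub : Subgroup Rˣ} (i1 : G → Tsub → S1) (q1 : S1 → G)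
    (i2 : G → Tsub → S2) (q2 : S2 → G) (ψ : S1 → S2) : Prop :=
  Function.Bijective ψ ∧ Continuous ψ ∧ (∀ V : Set S1, IsOpen V → IsOpen (ψ '' V)) ∧
    (∀ δ ε, T1.comp δ ε → T2.comp (ψ δ) (ψ ε) ∧ ψ (T1.mul δ ε) = T2.mul (ψ δ) (ψ ε)) ∧
    (∀ x ∈ TG.unitSpace, ∀ z : Tsub, ψ (i1 x z) = i2 x z) ∧
    ∀ ε, q2 (ψ ε) = q1 ε

/-- The carrier of the twisted Steinberg algebra `A_R(G; Σ)`: continuous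
`Tsub`-equivariant functions `f : Σ → R` such that `q(supp f)` has compact
closure. -/
def twistCarrier (TG : GroupoidStruct G) (TS : GroupoidStruct S)
    {Tsub : Subgroup Rˣ} (i : G → Tsub → S) (q : S → G) : Set (S → R) :=
  {f | Continuous f ∧
    (∀ (z : Tsub) (ε : S), f (TS.mul (i (TG.r (q ε)) z) ε) = ((z : Rˣ) : R) * f ε) ∧
    IsCompact (closure (q '' Function.support f))}

/-- The convolution `(f *_Σ g)(ε) = ∑_{γ ∈ G^{s(q(ε))}} f(ε P(γ)) g(P(γ)⁻¹)`. -/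
noncomputable def twistConv (TG : GroupoidStruct G) (TS : GroupoidStruct S)
    (q : S → G) (P : G → S) (f g : S → R) (ε : S) : R :=
  ∑ᶠ (γ : G) (_ : TG.r γ = TG.s (q ε)), f (TS.mul ε (P γ)) * g (TS.inv (P γ))

/-- The involution `f*(ε) = c (f (ε⁻¹))` on `A_R(G; Σ)`. -/
def twistStar (TS : GroupoidStruct S) (c : R → R) (f : S → R) (ε : S) : R :=
  c (f (TS.inv ε))

end Twist

section Aux

variable {R : Type*} [CommRing R] [TopologicalSpace R] [DiscreteTopology R]
  {Tsub : Subgroup Rˣ}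

private lemma coeR_injective : Function.Injective (fun z : Tsub => ((z : Rˣ) : R)) :=
  fun _ _ h => Subtype.ext (Units.ext h)

private lemma coeR_continuous : Continuous (fun z : Tsub => ((z : Rˣ) : R)) :=
  Units.continuous_val.comp continuous_subtype_val

private lemma discrete_Tsub : DiscreteTopology Tsub :=
  discreteTopology_iff_isOpen_singleton.mpr fun z => by
    have h : ({z} : Set Tsub) = (fun w : Tsub => ((w : Rˣ) : R)) ⁻¹' {((z : Rˣ) : R)} := by
      ext w
      simp only [Set.mem_singleton_iff, Set.mem_preimage]
      exact ⟨fun h => by rw [h], fun h => coeR_injective h⟩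
    rw [h]
    exact (isOpen_discrete _).preimage coeR_continuous

private lemma cont_to_sub {X : Type*} [TopologicalSpace X] {f : X → Tsub}
    (h : Continuous fun x => ((f x : Rˣ) : R)) : Continuous f := by
  rw [continuous_def]
  intro s _
  have hs : f ⁻¹' s
      = (fun x => ((f x : Rˣ) : R)) ⁻¹' ((fun z : Tsub => ((z : Rˣ) : R)) '' s) := by
    ext x
    simp only [Set.mem_preimage]
    exact (coeR_injective.mem_set_image).symm
  rw [hs]
  exact (isOpen_discrete _).preimage h

private lemma cancel_aux {T : Type*} [CommGroup T] (a x y : T) :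
    a * x * (a⁻¹ * y) = x * y := by
  rw [mul_mul_mul_comm, mul_inv_cancel, one_mul]

private lemma master {T : Type*} [CommGroup T] {s t x y c : T}
    (h : s * c = x * y * t) : s * t⁻¹ = x * y * c⁻¹ := by
  have h2 : s = x * y * t * c⁻¹ := eq_mul_inv_of_mul_eq h
  calc s * t⁻¹ = x * y * t * c⁻¹ * t⁻¹ := by rw [h2]
    _ = x * y * c⁻¹ * t * t⁻¹ := by
        simp only [mul_assoc, mul_comm, mul_left_comm]
    _ = x * y * c⁻¹ := by rw [mul_inv_cancel_right]

private lemma master' {T : Type*} [CommGroup T] {s t x y c : T}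
    (h : s * t⁻¹ = x * y * c⁻¹) : s * c = x * y * t := by
  have h2 : s * (c⁻¹)⁻¹ = x * y * (t⁻¹)⁻¹ := master h
  simpa using h2

end Aux

/-- For continuous 2-cocycles `σ, τ : G⁽²⁾ → Tsub ≤ Rˣ` on
a Hausdorff étale groupoid `G`, the following are equivalent:
(1) the discrete twists `G ×_σ T` and `G ×_τ T` are isomorphic;
(2) `σ` is cohomologous to `τ`;
(3) `σ` is induced by some continuous global section `P : G → G ×_τ T`. -/
theorem twist_iso_iff_cohomologous_iff_induced
    {G R : Type*} [TopologicalSpace G] [T2Space G] [LocallyCompactSpace G]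
    [CommRing R] [TopologicalSpace R] [DiscreteTopology R]
    (TG : GroupoidStruct G) (hTG : TG.IsTopGroupoid) (hetale : TG.IsEtale)
    (Tsub : Subgroup Rˣ) (σ τ : G → G → Tsub)
    (hσ : IsCocycleSub (R := R) TG Tsub σ) (hτ : IsCocycleSub (R := R) TG Tsub τ) :
    -- (1) ↔ (2)
    ((∃ ψ : G × Tsub → G × Tsub,
        IsTwistIso TG (prodTwist TG Tsub σ) (prodTwist TG Tsub τ)
          (prodTwistI Tsub) (prodTwistQ Tsub) (prodTwistI Tsub) (prodTwistQ Tsub) ψ)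
      ↔ (∃ b : G → Tsub, CohomologousVia (R := R) TG σ τ b))
    -- (2) ↔ (3)
    ∧ ((∃ b : G → Tsub, CohomologousVia (R := R) TG σ τ b)
      ↔ (∃ P : G → G × Tsub,
          IsGlobalSection TG (prodTwist TG Tsub τ) (prodTwistQ Tsub) P
            ∧ InducesCocycle TG (prodTwist TG Tsub τ) (prodTwistI Tsub) P σ)) := by
  have hg := hTG.toIsGroupoid
  haveI : DiscreteTopology Tsub := discrete_Tsub
  -- basic groupoid facts
  have hcompinv : ∀ γ, TG.comp γ (TG.inv γ) :=
    fun γ => (hg.comp_iff γ (TG.inv γ)).2 (hg.r_inv γ).symm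
  have hcompr : ∀ γ, TG.comp (TG.r γ) γ := by
    intro γ
    rw [hg.comp_iff]
    have h1 : TG.s (TG.r γ) = TG.s (TG.inv γ) := hg.s_mul γ (TG.inv γ) (hcompinv γ)
    rw [h1, hg.s_inv]
  -- (1) → (2)
  have h12 : (∃ ψ : G × Tsub → G × Tsub,
      IsTwistIso TG (prodTwist TG Tsub σ) (prodTwist TG Tsub τ)
        (prodTwistI Tsub) (prodTwistQ Tsub) (prodTwistI Tsub) (prodTwistQ Tsub) ψ) →
      (∃ b : G → Tsub, CohomologousVia (R := R) TG σ τ b) := by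
    rintro ⟨ψ, _hbij, hcont, _hopen, hhom, hi, hq⟩
    have hi' : ∀ x ∈ TG.unitSpace, ∀ z : Tsub, ψ (x, z) = (x, z) := hi
    refine ⟨fun γ => (ψ (γ, 1)).2, ?_, ?_, ?_⟩
    · exact coeR_continuous.comp
        ((hcont.comp (continuous_id.prodMk continuous_const)).snd)
    · intro x hx
      show (ψ (x, 1)).2 = 1
      rw [hi' x hx 1]
    · intro α β hcomp
      have hψ1 : ∀ γ : G, ψ (γ, (1 : Tsub)) = (γ, (ψ (γ, 1)).2) := by
        intro γ
        have h1 : (ψ (γ, 1)).1 = γ := hq (γ, 1)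
        exact Prod.ext h1 rfl
      have hψform : ∀ (γ : G) (w : Tsub), ψ (γ, w) = (γ, w * (ψ (γ, 1)).2) := by
        intro γ w
        have hdec : ((γ, w) : G × Tsub)
            = (prodTwist TG Tsub σ).mul (TG.r γ, w) (γ, 1) := by
          show ((γ, w) : G × Tsub) = (TG.mul (TG.r γ) γ, σ (TG.r γ) γ * w * 1)
          rw [hg.r_mul_self, hσ.norm_left, one_mul, mul_one]
        have hcr : (prodTwist TG Tsub σ).comp (TG.r γ, w) (γ, 1) := hcompr γ
        have hh := (hhom _ _ hcr).2
        rw [← hdec] at hh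
        rw [hh, hi' (TG.r γ) (hg.r_unit γ) w, hψ1 γ]
        show (TG.mul (TG.r γ) γ, τ (TG.r γ) γ * w * (ψ (γ, 1)).2)
            = (γ, w * (ψ (γ, 1)).2)
        rw [hg.r_mul_self, hτ.norm_left, one_mul]
      have h1 := (hhom (α, 1) (β, 1) hcomp).2
      have hmul1 : (prodTwist TG Tsub σ).mul (α, 1) (β, 1)
          = (TG.mul α β, σ α β * 1 * 1) := rfl
      rw [hmul1, hψform (TG.mul α β) (σ α β * 1 * 1), hψ1 α, hψ1 β] at h1
      have hmul2 : (prodTwist TG Tsub τ).mul (α, (ψ (α, 1)).2) (β, (ψ (β, 1)).2)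
          = (TG.mul α β, τ α β * (ψ (α, 1)).2 * (ψ (β, 1)).2) := rfl
      rw [hmul2] at h1
      have h2 : σ α β * 1 * 1 * (ψ (TG.mul α β, 1)).2
          = τ α β * (ψ (α, 1)).2 * (ψ (β, 1)).2 := congrArg Prod.snd h1
      rw [mul_one, mul_one] at h2
      have h3 : σ α β * (ψ (TG.mul α β, 1)).2
          = (ψ (α, 1)).2 * (ψ (β, 1)).2 * τ α β := by
        rw [h2]
        simp only [mul_assoc, mul_comm, mul_left_comm]
      exact master h3
  -- (2) → (1)
  have h21 : (∃ b : G → Tsub, CohomologousVia (R := R) TG σ τ b) →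
      (∃ ψ : G × Tsub → G × Tsub,
        IsTwistIso TG (prodTwist TG Tsub σ) (prodTwist TG Tsub τ)
          (prodTwistI Tsub) (prodTwistQ Tsub) (prodTwistI Tsub) (prodTwistQ Tsub) ψ) := by
    rintro ⟨b, hbc, hbu, hbh⟩
    have hb : Continuous b := cont_to_sub hbc
    have hbinv : Continuous fun γ : G => (b γ)⁻¹ :=
      (continuous_of_discreteTopology (α := Tsub)).comp hb
    set ψ : G × Tsub → G × Tsub := fun p => (p.1, b p.1 * p.2) with hψdef
    set φ : G × Tsub → G × Tsub := fun p => (p.1, (b p.1)⁻¹ * p.2) with hφdef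
    have hl : Function.LeftInverse φ ψ := by
      intro p
      show ((p.1, (b p.1)⁻¹ * (b p.1 * p.2)) : G × Tsub) = p
      rw [inv_mul_cancel_left]
    have hr : Function.RightInverse φ ψ := by
      intro p
      show ((p.1, b p.1 * ((b p.1)⁻¹ * p.2)) : G × Tsub) = p
      rw [mul_inv_cancel_left]
    have hψcont : Continuous ψ :=
      continuous_fst.prodMk
        ((continuous_of_discreteTopology (α := Tsub × Tsub)
            (f := fun q : Tsub × Tsub => q.1 * q.2)).comp
          ((hb.comp continuous_fst).prodMk continuous_snd))
    have hφcont : Continuous φ :=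
      continuous_fst.prodMk
        ((continuous_of_discreteTopology (α := Tsub × Tsub)
            (f := fun q : Tsub × Tsub => q.1 * q.2)).comp
          ((hbinv.comp continuous_fst).prodMk continuous_snd))
    refine ⟨ψ, Function.bijective_iff_has_inverse.mpr ⟨φ, hl, hr⟩, hψcont, ?_, ?_, ?_, ?_⟩
    · intro V hV
      rw [Set.image_eq_preimage_of_inverse hl hr]
      exact hV.preimage hφcont
    · intro δ ε hcomp
      refine ⟨hcomp, ?_⟩
      show (TG.mul δ.1 ε.1, b (TG.mul δ.1 ε.1) * (σ δ.1 ε.1 * δ.2 * ε.2))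
          = (TG.mul δ.1 ε.1,
              τ δ.1 ε.1 * (b δ.1 * δ.2) * (b ε.1 * ε.2))
      have h' : σ δ.1 ε.1 * b (TG.mul δ.1 ε.1) = b δ.1 * b ε.1 * τ δ.1 ε.1 :=
        master' (hbh δ.1 ε.1 hcomp)
      have hsnd : b (TG.mul δ.1 ε.1) * (σ δ.1 ε.1 * δ.2 * ε.2)
          = τ δ.1 ε.1 * (b δ.1 * δ.2) * (b ε.1 * ε.2) := by
        calc b (TG.mul δ.1 ε.1) * (σ δ.1 ε.1 * δ.2 * ε.2)
            = σ δ.1 ε.1 * b (TG.mul δ.1 ε.1) * (δ.2 * ε.2) := by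
              simp only [mul_assoc, mul_comm, mul_left_comm]
          _ = b δ.1 * b ε.1 * τ δ.1 ε.1 * (δ.2 * ε.2) := by rw [h']
          _ = τ δ.1 ε.1 * (b δ.1 * δ.2) * (b ε.1 * ε.2) := by
              simp only [mul_assoc, mul_comm, mul_left_comm]
      rw [hsnd]
    · intro x hx z
      show ((x, b x * z) : G × Tsub) = (x, z)
      rw [hbu x hx, one_mul]
    · intro ε
      rfl
  -- (2) → (3)
  have h23 : (∃ b : G → Tsub, CohomologousVia (R := R) TG σ τ b) →
      (∃ P : G → G × Tsub,
        IsGlobalSection TG (prodTwist TG Tsub τ) (prodTwistQ Tsub) P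
          ∧ InducesCocycle TG (prodTwist TG Tsub τ) (prodTwistI Tsub) P σ) := by
    rintro ⟨b, hbc, hbu, hbh⟩
    have hb : Continuous b := cont_to_sub hbc
    refine ⟨fun γ => (γ, b γ), ⟨continuous_id.prodMk hb, fun γ => rfl, ?_⟩, ?_⟩
    · intro x hx
      show (prodTwist TG Tsub τ).r (x, b x) = (x, b x)
      show (TG.mul x (TG.inv x),
          τ x (TG.inv x) * b x * ((τ x (TG.inv x))⁻¹ * (b x)⁻¹)) = (x, b x)
      rw [cancel_aux, hbu x hx]
      have hx' : TG.r x = x := hx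
      show (TG.r x, (1 : Tsub) * 1⁻¹) = (x, 1)
      rw [hx', inv_one, mul_one]
    · intro α β hcomp
      show (TG.mul (TG.mul α β) (TG.inv (TG.mul α β)),
          τ (TG.mul α β) (TG.inv (TG.mul α β)) * (τ α β * b α * b β)
            * ((τ (TG.mul α β) (TG.inv (TG.mul α β)))⁻¹ * (b (TG.mul α β))⁻¹))
          = (TG.r α, σ α β)
      rw [cancel_aux]
      have h4 : σ α β * b (TG.mul α β) = b α * b β * τ α β := master' (hbh α β hcomp)
      have h5 : σ α β = b α * b β * τ α β * (b (TG.mul α β))⁻¹ := eq_mul_inv_of_mul_eq h4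
      have hsnd : τ α β * b α * b β * (b (TG.mul α β))⁻¹ = σ α β := by
        rw [h5]
        simp only [mul_assoc, mul_comm, mul_left_comm]
      rw [hsnd]
      have hfst : TG.mul (TG.mul α β) (TG.inv (TG.mul α β)) = TG.r α :=
        hg.r_mul α β hcomp
      rw [hfst]
  -- (3) → (2)
  have h32 : (∃ P : G → G × Tsub,
      IsGlobalSection TG (prodTwist TG Tsub τ) (prodTwistQ Tsub) P
        ∧ InducesCocycle TG (prodTwist TG Tsub τ) (prodTwistI Tsub) P σ) →
      (∃ b : G → Tsub, CohomologousVia (R := R) TG σ τ b) := by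
    rintro ⟨P, ⟨hPcont, hPq, hPu⟩, hind⟩
    have hPform : ∀ γ, P γ = (γ, (P γ).2) := by
      intro γ
      have h1 : (P γ).1 = γ := hPq γ
      exact Prod.ext h1 rfl
    refine ⟨fun γ => (P γ).2, coeR_continuous.comp hPcont.snd, ?_, ?_⟩
    · intro x hx
      have h := hPu x hx
      have h2 : (prodTwist TG Tsub τ).r (x, (P x).2) = (x, (P x).2) := by
        rw [← hPform x]; exact h
      have h3 : τ x (TG.inv x) * (P x).2 * ((τ x (TG.inv x))⁻¹ * ((P x).2)⁻¹)
          = (P x).2 := congrArg Prod.snd h2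
      rw [cancel_aux, mul_inv_cancel] at h3
      exact h3.symm
    · intro α β hcomp
      have h := hind α β hcomp
      rw [hPform α, hPform β, hPform (TG.mul α β)] at h
      have h3 : τ (TG.mul α β) (TG.inv (TG.mul α β)) * (τ α β * (P α).2 * (P β).2)
            * ((τ (TG.mul α β) (TG.inv (TG.mul α β)))⁻¹ * ((P (TG.mul α β)).2)⁻¹)
          = σ α β := congrArg Prod.snd h
      rw [cancel_aux] at h3
      have h4 : σ α β * (P (TG.mul α β)).2 = τ α β * (P α).2 * (P β).2 := by
        rw [← h3, inv_mul_cancel_right]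
      have h5 : σ α β * (P (TG.mul α β)).2 = (P α).2 * (P β).2 * τ α β := by
        rw [h4]
        simp only [mul_assoc, mul_comm, mul_left_comm]
      exact master h5
  exact ⟨⟨h12, h21⟩, ⟨h23, h32⟩⟩
end TwistedSteinberg
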